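/- Let C be the cluster category of a hereditary algebra H, T a tilting object in C, Γ = End_C(T)^op, and G = Hom_C(T, −) : C → mod Γ. Then G is dense: every finitely generated Γ-module Y is isomorphic to G(A) for some object A of C. Specifically, if P₁ → P₀ → Y → 0 is a projective presentation with Pᵢ = G(Tᵢ), Tᵢ ∈ add T, and the map T₁ → T₀ is completed to a triangle T₁ → T₀ → A → T₁[1] in C, then G(A) ≅ Y. -/

import Mathlib

open CategoryTheory Limits Pretriangulated Opposite

universe v u

/-- `X ∈ add T`: `X` is a direct summand of a finite direct sum of copies of `T`. -/
def memAddC {C : Type u} [Category.{v} C] [Preadditive C] [HasFiniteBiproducts C]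
    (T X : C) : Prop :=
  ∃ (n : ℕ) (i : X ⟶ ⨁ (fun _ : Fin n => T)) (p : ⨁ (fun _ : Fin n => T) ⟶ X),
    i ≫ p = 𝟙 X

/-- The `End X`-module structure on `unop X ⟶ Y` for `X : Cᵒᵖ` (as in the older Mathlib). -/
instance moduleEndLeftOld {C : Type u} [Category.{v} C] [Preadditive C] {X : Cᵒᵖ} {Y : C} :
    Module (End X) (unop X ⟶ Y) where
  smul r f := r.unop ≫ f
  one_smul := Category.id_comp
  mul_smul _ _ _ := Category.assoc _ _ _
  smul_zero _ := Limits.comp_zero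
  zero_smul _ := Limits.zero_comp
  smul_add _ _ _ := Preadditive.comp_add _ _ _ _ _ _
  add_smul _ _ _ := Preadditive.add_comp _ _ _ _ _ _

/-- The older Mathlib's `preadditiveCoyonedaObj (X : Cᵒᵖ) : C ⥤ ModuleCat (End X)`. -/
def preadditiveCoyonedaObjOld {C : Type u} [Category.{v} C] [Preadditive C] (X : Cᵒᵖ) :
    C ⥤ ModuleCat.{v} (End X) where
  obj Y := ModuleCat.of _ (unop X ⟶ Y)
  map f := ModuleCat.ofHom
    { toFun := fun g => g ≫ f
      map_add' := fun _ _ => Preadditive.add_comp _ _ _ _ _ _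
      map_smul' := fun _ _ => Category.assoc _ _ _ }

/-- `T` is a tilting object: `Hom_C(T, X[1]) = 0` if and only if `X ∈ add T`. -/
def IsTiltingObject {C : Type u} [Category.{v} C] [Preadditive C] [HasFiniteBiproducts C]
    [HasShift C ℤ] (T : C) : Prop :=
  ∀ X : C, (∀ f : T ⟶ X⟦(1 : ℤ)⟧, f = 0) ↔ memAddC T X

/-- Let `C` be the cluster category of a hereditary algebra (a triangulated category), `T` a
tilting object, `Γ = End_C(T)ᵒᵖ`, and `G = Hom_C(T, −) : C → mod Γ` (which restricts to an
equivalence `add T → proj Γ`, so every finitely generated `Γ`-module has a projective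
presentation by modules `G(T₁) → G(T₀)`).  Then:
(1) `G` is dense: every finitely generated `Γ`-module `Y` is isomorphic to `G(A)` for some
object `A` of `C`; and specifically
(2) if `G(T₁) → G(T₀) → Y → 0` is a projective presentation with `T₁, T₀ ∈ add T`, and the map
`T₁ → T₀` is completed to a triangle `T₁ → T₀ → A → T₁[1]` in `C`, then `G(A) ≅ Y`. -/
theorem stmt11 {C : Type u} [Category.{v} C] [Preadditive C] [HasZeroObject C]
    [HasShift C ℤ] [∀ n : ℤ, (shiftFunctor C n).Additive] [Pretriangulated C]
    [HasFiniteBiproducts C]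
    (T : C) (hT : IsTiltingObject T)
    (G : C ⥤ ModuleCat.{v} (End (op T))) (hG : G = preadditiveCoyonedaObjOld (op T))
    (hpres : ∀ Y : ModuleCat.{v} (End (op T)), Module.Finite (End (op T)) Y →
      ∃ (T₁ T₀ : C) (_ : memAddC T T₁) (_ : memAddC T T₀) (α : T₁ ⟶ T₀)
        (π : G.obj T₀ ⟶ Y), Function.Surjective π ∧
          LinearMap.range (G.map α).hom = LinearMap.ker π.hom) :
    (∀ Y : ModuleCat.{v} (End (op T)), Module.Finite (End (op T)) Y →
      ∃ A : C, Nonempty (G.obj A ≅ Y)) ∧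
    (∀ (T₁ T₀ A : C) (α : T₁ ⟶ T₀) (g : T₀ ⟶ A) (h : A ⟶ T₁⟦(1 : ℤ)⟧),
      memAddC T T₁ → memAddC T T₀ →
      (Triangle.mk α g h ∈ distTriang C) →
      ∀ (Y : ModuleCat.{v} (End (op T))) (π : G.obj T₀ ⟶ Y),
        Function.Surjective π → LinearMap.range (G.map α).hom = LinearMap.ker π.hom →
        Nonempty (G.obj A ≅ Y)) := by
  have key : ∀ (T₁ T₀ A : C) (α : T₁ ⟶ T₀) (g : T₀ ⟶ A) (h : A ⟶ T₁⟦(1 : ℤ)⟧),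
      memAddC T T₁ → memAddC T T₀ →
      (Triangle.mk α g h ∈ distTriang C) →
      ∀ (Y : ModuleCat.{v} (End (op T))) (π : G.obj T₀ ⟶ Y),
        Function.Surjective π → LinearMap.range (G.map α).hom = LinearMap.ker π.hom →
        Nonempty (G.obj A ≅ Y) := by
    intro T₁ T₀ A α g hmap hT₁ hT₀ hdist Y π hπ hker
    subst hG
    have hzero : ∀ f : T ⟶ T₁⟦(1 : ℤ)⟧, f = 0 := (hT T₁).mpr hT₁
    -- surjectivity of G.map g
    have hsurj : Function.Surjective ((preadditiveCoyonedaObjOld (op T)).map g) := by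
      intro f
      obtain ⟨e, he⟩ := Triangle.coyoneda_exact₃ _ hdist (f : T ⟶ A) (hzero _)
      exact ⟨e, he.symm⟩
    -- kernel of G.map g equals range of G.map α
    have hk : LinearMap.ker ((preadditiveCoyonedaObjOld (op T)).map g).hom
        = LinearMap.range ((preadditiveCoyonedaObjOld (op T)).map α).hom := by
      ext f
      constructor
      · intro hf
        obtain ⟨e, he⟩ := Triangle.coyoneda_exact₂ _ hdist (f : T ⟶ T₀) hf
        exact ⟨e, he.symm⟩
      · rintro ⟨e, rfl⟩
        show ((e : T ⟶ T₁) ≫ α) ≫ g = 0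
        have h0 : α ≫ g = 0 := comp_distTriang_mor_zero₁₂ _ hdist
        exact (Category.assoc (obj := C) e α g).trans
          ((congrArg (fun x => (e : T ⟶ T₁) ≫ x) h0).trans comp_zero)
    have e₁ := LinearMap.quotKerEquivOfSurjective ((preadditiveCoyonedaObjOld (op T)).map g).hom hsurj
    have e₂ := LinearMap.quotKerEquivOfSurjective π.hom hπ
    have hkk : LinearMap.ker ((preadditiveCoyonedaObjOld (op T)).map g).hom
        = LinearMap.ker π.hom := by rw [hk, hker]
    exact ⟨(e₁.symm.trans ((Submodule.quotEquivOfEq _ _ hkk).trans e₂)).toModuleIso⟩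
  refine ⟨?_, key⟩
  intro Y hY
  obtain ⟨T₁, T₀, hT₁, hT₀, α, π, hπ, hker⟩ := hpres Y hY
  obtain ⟨A, g, h, hdist⟩ := Pretriangulated.distinguished_cocone_triangle α
  exact ⟨A, key T₁ T₀ A α g h hT₁ hT₀ hdist Y π hπ hker⟩
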